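/- arXiv:1202.2076 — 4 statements merged into one kernel-verified Lean document; each statement's English description precedes it below -/
import Mathlib

section
/- For β ∈ (0,1], the function ψ_β(x) := (φ_β(x) − x)/((1 − x)·φ_β(x)), where φ_β(x) := ((1+x)/(1+(1+β)x))^{1/x − 1}, defined for x > 0, x ≠ 1, extends to a continuous function on [0,∞). -/
noncomputable def phi (β x : ℝ) : ℝ := ((1 + x) / (1 + (1 + β) * x)) ^ (1 / x - 1)

noncomputable def psi (β x : ℝ) : ℝ := (phi β x - x) / ((1 - x) * phi β x)

open Real Filter Set Topology

lemma denom_pos {β x : ℝ} (hβ : 0 < β) (hx : 0 ≤ x) : 0 < 1 + (1 + β) * x := by nlinarith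

lemma base_pos {β x : ℝ} (hβ : 0 < β) (hx : 0 ≤ x) : 0 < (1 + x) / (1 + (1 + β) * x) :=
  div_pos (by linarith) (denom_pos hβ hx)

lemma phi_pos {β x : ℝ} (hβ : 0 < β) (hx : 0 ≤ x) : 0 < phi β x :=
  Real.rpow_pos_of_pos (base_pos hβ hx) _

lemma phi_eq_exp {β x : ℝ} (hβ : 0 < β) (hx : 0 < x) :
    phi β x = Real.exp ((1 / x - 1) * (Real.log (1 + x) - Real.log (1 + (1 + β) * x))) := by
  rw [phi, Real.rpow_def_of_pos (base_pos hβ hx.le),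
    Real.log_div (by linarith) (ne_of_gt (denom_pos hβ hx.le)), mul_comm]

lemma phi_one (β : ℝ) : phi β 1 = 1 := by norm_num [phi]

lemma phi_continuousAt {β x : ℝ} (hβ : 0 < β) (hx : 0 < x) : ContinuousAt (phi β) x := by
  apply ContinuousAt.rpow
  · exact (continuousAt_const.add continuousAt_id).div
      (continuousAt_const.add (continuousAt_const.mul continuousAt_id))
      (ne_of_gt (denom_pos hβ hx.le))
  · exact (continuousAt_const.div continuousAt_id (ne_of_gt hx)).sub continuousAt_const
  · exact Or.inl (ne_of_gt (base_pos hβ hx.le))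

lemma phi_hasDeriv {β : ℝ} (hβ : 0 < β) : ∃ d : ℝ, HasDerivAt (phi β) d 1 := by
  have h1 : HasDerivAt (fun x : ℝ => 1 / x - 1) (-((1:ℝ)^2)⁻¹) 1 := by
    simpa [one_div] using (hasDerivAt_inv (one_ne_zero)).sub_const (1:ℝ)
  have h2 : HasDerivAt (fun x : ℝ => Real.log (1 + x)) (1 / (1 + 1)) 1 :=
    ((hasDerivAt_id (1:ℝ)).const_add 1).log (by norm_num)
  have i2 : HasDerivAt (fun x : ℝ => 1 + (1 + β) * x) (1 + β) 1 := by
    simpa using ((hasDerivAt_id (1:ℝ)).const_mul (1 + β)).const_add 1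
  have h3 : HasDerivAt (fun x : ℝ => Real.log (1 + (1 + β) * x))
      ((1 + β) / (1 + (1 + β) * 1)) 1 := i2.log (by nlinarith)
  have h4 := (h1.mul (h2.sub h3)).exp
  have hev : phi β =ᶠ[𝓝 (1:ℝ)]
      (fun x => Real.exp ((1 / x - 1) * (Real.log (1 + x) - Real.log (1 + (1 + β) * x)))) := by
    filter_upwards [Ioi_mem_nhds (by norm_num : (0:ℝ) < 1)] with x hx
    exact phi_eq_exp hβ hx
  exact ⟨_, h4.congr_of_eventuallyEq hev⟩

lemma psi_tendsto_one {β d : ℝ} (hβ : 0 < β) (hd : HasDerivAt (phi β) d 1) :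
    Tendsto (psi β) (𝓝[≠] (1:ℝ)) (𝓝 (1 - d)) := by
  have hslope : Tendsto (slope (phi β) 1) (𝓝[≠] (1:ℝ)) (𝓝 d) :=
    hasDerivAt_iff_tendsto_slope.mp hd
  have hphi : Tendsto (phi β) (𝓝[≠] (1:ℝ)) (𝓝 1) := by
    have h := hd.continuousAt.tendsto
    rw [phi_one β] at h
    exact h.mono_left nhdsWithin_le_nhds
  have key : Tendsto (fun x => (1 - slope (phi β) 1 x) / phi β x) (𝓝[≠] (1:ℝ))
      (𝓝 ((1 - d) / 1)) := (tendsto_const_nhds.sub hslope).div hphi one_ne_zero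
  rw [div_one] at key
  refine key.congr' ?_
  filter_upwards [self_mem_nhdsWithin,
    nhdsWithin_le_nhds (Ioi_mem_nhds (by norm_num : (0:ℝ) < 1))] with x hx1 hx0
  have hx1' : x ≠ 1 := hx1
  have hφ : phi β x ≠ 0 := (phi_pos hβ (le_of_lt hx0)).ne'
  have hs : x - 1 ≠ 0 := sub_ne_zero.mpr hx1'
  have hs' : (1:ℝ) - x ≠ 0 := sub_ne_zero.mpr (Ne.symm hx1')
  rw [slope_def_field, phi_one, psi]
  field_simp
  ring

lemma psi_tendsto_zero {β : ℝ} (hβ : 0 < β) :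
    Tendsto (psi β) (𝓝[>] (0:ℝ)) (𝓝 1) := by
  have h2 : HasDerivAt (fun x : ℝ => Real.log (1 + x)) (1 / (1 + 0)) 0 :=
    ((hasDerivAt_id (0:ℝ)).const_add 1).log (by norm_num)
  have i2 : HasDerivAt (fun x : ℝ => 1 + (1 + β) * x) (1 + β) 0 := by
    simpa using ((hasDerivAt_id (0:ℝ)).const_mul (1 + β)).const_add 1
  have h3 : HasDerivAt (fun x : ℝ => Real.log (1 + (1 + β) * x))
      ((1 + β) / (1 + (1 + β) * 0)) 0 := i2.log (by norm_num)
  have hval : (1:ℝ) / (1 + 0) - (1 + β) / (1 + (1 + β) * 0) = -β := by norm_num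
  have hL : HasDerivAt (fun x : ℝ => Real.log (1 + x) - Real.log (1 + (1 + β) * x)) (-β) 0 :=
    hval ▸ (h2.sub h3)
  have hs : Tendsto (fun x : ℝ => (Real.log (1 + x) - Real.log (1 + (1 + β) * x)) / x)
      (𝓝[≠] (0:ℝ)) (𝓝 (-β)) := by
    have h := hasDerivAt_iff_tendsto_slope.mp hL
    refine h.congr' ?_
    filter_upwards [self_mem_nhdsWithin] with x hx
    have hx' : x ≠ 0 := hx
    rw [slope_def_field]
    norm_num
  have hid : Tendsto (fun x : ℝ => x) (𝓝[>] (0:ℝ)) (𝓝 0) :=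
    tendsto_id.mono_right nhdsWithin_le_nhds
  have h1x : Tendsto (fun x : ℝ => 1 - x) (𝓝[>] (0:ℝ)) (𝓝 1) := by
    simpa using tendsto_const_nhds.sub hid
  have hs' : Tendsto (fun x : ℝ => (1 - x) *
      ((Real.log (1 + x) - Real.log (1 + (1 + β) * x)) / x)) (𝓝[>] (0:ℝ)) (𝓝 (-β)) := by
    simpa using h1x.mul (hs.mono_left (nhdsWithin_mono 0 (fun y hy => ne_of_gt hy)))
  have hphi0 : Tendsto (phi β) (𝓝[>] (0:ℝ)) (𝓝 (Real.exp (-β))) := by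
    have he : Tendsto (fun x : ℝ => Real.exp ((1 - x) *
        ((Real.log (1 + x) - Real.log (1 + (1 + β) * x)) / x))) (𝓝[>] (0:ℝ))
        (𝓝 (Real.exp (-β))) := (Real.continuous_exp.tendsto _).comp hs'
    refine he.congr' ?_
    filter_upwards [self_mem_nhdsWithin] with x hx
    rw [phi_eq_exp hβ hx]
    have hx' : x ≠ 0 := ne_of_gt hx
    congr 1
    rw [show 1 / x - 1 = (1 - x) / x by field_simp]
    ring
  have hfin : Tendsto (fun x => (phi β x - x) / ((1 - x) * phi β x)) (𝓝[>] (0:ℝ))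
      (𝓝 ((Real.exp (-β) - 0) / (1 * Real.exp (-β)))) :=
    (hphi0.sub hid).div (h1x.mul hphi0) (by positivity)
  have : (Real.exp (-β) - 0) / (1 * Real.exp (-β)) = 1 := by
    rw [sub_zero, one_mul, div_self (Real.exp_ne_zero _)]
  rw [this] at hfin
  exact hfin

theorem psi_extends_continuously (β : ℝ) (hβ : β ∈ Set.Ioc (0 : ℝ) 1) :
    ∃ g : ℝ → ℝ, ContinuousOn g (Set.Ici (0 : ℝ)) ∧
      ∀ x : ℝ, 0 < x → x ≠ 1 → g x = psi β x := by
  obtain ⟨hβ0, _⟩ := hβ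
  obtain ⟨d, hd⟩ := phi_hasDeriv hβ0
  classical
  refine ⟨fun x => if x = 0 then 1 else if x = 1 then 1 - d else psi β x, ?_, ?_⟩
  · intro x hx
    rcases eq_or_lt_of_le (Set.mem_Ici.mp hx : (0:ℝ) ≤ x) with h0 | h0
    · -- x = 0
      subst h0
      rw [← continuousWithinAt_diff_self, Set.Ici_sdiff_left]
      have ht : Tendsto (fun x => if x = 0 then (1:ℝ) else if x = 1 then 1 - d else psi β x)
          (𝓝[>] (0:ℝ)) (𝓝 1) := by
        refine (psi_tendsto_zero hβ0).congr' ?_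
        filter_upwards [self_mem_nhdsWithin,
          nhdsWithin_le_nhds (Iio_mem_nhds (by norm_num : (0:ℝ) < 1))] with y hy0 hy1
        rw [if_neg (ne_of_gt hy0), if_neg (ne_of_lt hy1)]
      show Tendsto _ (𝓝[>] (0:ℝ)) _
      convert ht using 2
      norm_num
    · rcases eq_or_ne x 1 with h1 | h1
      · -- x = 1
        subst h1
        rw [← continuousWithinAt_diff_self]
        have ht : Tendsto (fun x => if x = 0 then (1:ℝ) else if x = 1 then 1 - d else psi β x)
            (𝓝[≠] (1:ℝ)) (𝓝 (1 - d)) := by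
          refine (psi_tendsto_one hβ0 hd).congr' ?_
          filter_upwards [self_mem_nhdsWithin,
            nhdsWithin_le_nhds (Ioi_mem_nhds (by norm_num : (0:ℝ) < 1))] with y hy1 hy0
          have hy1' : y ≠ 1 := hy1
          rw [if_neg (ne_of_gt hy0), if_neg hy1']
        show Tendsto _ (𝓝[Set.Ici 0 \ {1}] (1:ℝ)) _
        have hsub : Set.Ici (0:ℝ) \ {1} ⊆ {(1:ℝ)}ᶜ := fun y hy => hy.2
        convert ht.mono_left (nhdsWithin_mono 1 hsub) using 2
        norm_num
      · -- 0 < x, x ≠ 1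
        apply ContinuousAt.continuousWithinAt
        have hψ : ContinuousAt (psi β) x := by
          have hφ := phi_continuousAt hβ0 h0
          have h : ContinuousAt (fun y => (phi β y - y) / ((1 - y) * phi β y)) x :=
            (hφ.sub continuousAt_id).div ((continuousAt_const.sub continuousAt_id).mul hφ)
              (mul_ne_zero (sub_ne_zero.mpr (Ne.symm h1)) (phi_pos hβ0 h0.le).ne')
          exact h
        refine hψ.congr ?_
        filter_upwards [Ioi_mem_nhds h0, compl_singleton_mem_nhds h1] with y hy0 hy1
        have hy1' : y ≠ 1 := hy1
        rw [if_neg (ne_of_gt hy0), if_neg hy1']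
  · intro x hx0 hx1
    simp only [if_neg (ne_of_gt hx0), if_neg hx1]
end

section
/- For all x ≥ 0, ψ_1(x) = inf over β ∈ (0,1] of ψ_β(x); equivalently, for every β ∈ (0,1] and x ≥ 0, ψ_1(x) ≤ ψ_β(x). -/
lemma psi_key (β x : ℝ) (hβ0 : 0 < β) (hβ1 : β ≤ 1) (hx : 0 < x) (hx1 : x ≠ 1) :
    psi 1 x ≤ psi β x := by
  have h1x : (0:ℝ) < 1 + x := by linarith
  have hd1 : (0:ℝ) < 1 + (1 + β) * x := by nlinarith
  have hd2 : (0:ℝ) < 1 + (1 + (1:ℝ)) * x := by linarith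
  set a : ℝ := (1 + x) / (1 + (1 + β) * x) with ha_def
  set b : ℝ := (1 + x) / (1 + (1 + (1:ℝ)) * x) with hb_def
  have ha : 0 < a := div_pos h1x hd1
  have hb : 0 < b := div_pos h1x hd2
  have hba : b ≤ a := by
    apply div_le_div_of_nonneg_left h1x.le hd1
    nlinarith
  set e : ℝ := 1 / x - 1 with he_def
  have hA : 0 < phi β x := Real.rpow_pos_of_pos ha e
  have hB : 0 < phi 1 x := Real.rpow_pos_of_pos hb e
  unfold psi
  rcases lt_or_gt_of_ne hx1 with hlt | hgt
  · -- x < 1, e > 0, phi 1 x ≤ phi β x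
    have he : 0 ≤ e := by
      rw [he_def, sub_nonneg, le_div_iff₀ hx]; linarith
    have hBA : phi 1 x ≤ phi β x := Real.rpow_le_rpow hb.le hba he
    have h1mx : (0:ℝ) < 1 - x := by linarith
    rw [div_le_div_iff₀ (by positivity) (by positivity)]
    nlinarith [mul_le_mul_of_nonneg_left hBA (by positivity : (0:ℝ) ≤ x * (1 - x))]
  · -- x > 1, e < 0, phi β x ≤ phi 1 x
    have he : e ≤ 0 := by
      rw [he_def, sub_nonpos, div_le_one hx]; linarith
    have hAB : phi β x ≤ phi 1 x := Real.rpow_le_rpow_of_nonpos hb hba he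
    have h1mx : (0:ℝ) < x - 1 := by linarith
    have e1 : (phi 1 x - x) / ((1 - x) * phi 1 x) = (x - phi 1 x) / ((x - 1) * phi 1 x) := by
      rw [div_eq_div_iff (by nlinarith) (by positivity)]; ring
    have e2 : (phi β x - x) / ((1 - x) * phi β x) = (x - phi β x) / ((x - 1) * phi β x) := by
      rw [div_eq_div_iff (by nlinarith) (by positivity)]; ring
    rw [e1, e2, div_le_div_iff₀ (by positivity) (by positivity)]
    nlinarith [mul_le_mul_of_nonneg_left hAB (by positivity : (0:ℝ) ≤ x * (x - 1))]

theorem psi_one_is_inf (β : ℝ) (hβ : β ∈ Set.Ioc (0 : ℝ) 1) (g₁ gβ : ℝ → ℝ)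
    (hg₁_cont : ContinuousOn g₁ (Set.Ici (0 : ℝ)))
    (hg₁_eq : ∀ x : ℝ, 0 < x → x ≠ 1 → g₁ x = psi 1 x)
    (hgβ_cont : ContinuousOn gβ (Set.Ici (0 : ℝ)))
    (hgβ_eq : ∀ x : ℝ, 0 < x → x ≠ 1 → gβ x = psi β x) :
    ∀ x : ℝ, 0 ≤ x → g₁ x ≤ gβ x := by
  obtain ⟨hβ0, hβ1⟩ := hβ
  set s : Set ℝ := Set.Ioi 0 \ {1} with hs_def
  have hcl : closure s = Set.Ici (0 : ℝ) := by
    apply subset_antisymm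
    · rw [show Set.Ici (0:ℝ) = closure (Set.Ioi 0) from (closure_Ioi 0).symm]
      exact closure_mono Set.diff_subset
    · have h1 : Set.Ioi (0:ℝ) ⊆ closure s := by
        intro x hx
        rcases eq_or_ne x 1 with rfl | hne
        · have : Set.Ioo (0:ℝ) 1 ⊆ s := fun y hy =>
            ⟨hy.1, by simp [Set.mem_singleton_iff]; exact ne_of_lt hy.2⟩
          have h1cl : (1:ℝ) ∈ closure (Set.Ioo (0:ℝ) 1) := by
            rw [closure_Ioo one_ne_zero.symm]; exact Set.right_mem_Icc.mpr zero_le_one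
          exact closure_mono this h1cl
        · exact subset_closure ⟨hx, hne⟩
      calc Set.Ici (0:ℝ) = closure (Set.Ioi 0) := (closure_Ioi 0).symm
        _ ⊆ closure (closure s) := closure_mono h1
        _ = closure s := closure_closure
  have hle : ∀ x ∈ s, g₁ x ≤ gβ x := by
    intro x hx
    obtain ⟨hx0, hx1⟩ := hx
    rw [hg₁_eq x hx0 hx1, hgβ_eq x hx0 hx1]
    exact psi_key β x hβ0 hβ1 hx0 hx1
  have := le_on_closure hle (by rw [hcl]; exact hg₁_cont) (by rw [hcl]; exact hgβ_cont)
  intro x hx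
  exact this (by rw [hcl]; exact hx)
end

section
/- For every β ∈ (0,1], the function ψ_β is (weakly) decreasing on [0,∞). -/
open Real Set Filter Topology

noncomputable def Lg (c x : ℝ) : ℝ := Real.log (1 + c * x) - Real.log (1 + x)

noncomputable def Ff (c x : ℝ) : ℝ := x * Real.exp ((x⁻¹ - 1) * Lg c x)

noncomputable def Gd (c x : ℝ) : ℝ :=
  -(x ^ 2)⁻¹ * Lg c x + (x⁻¹ - 1) * (c * (1 + c * x)⁻¹ - (1 + x)⁻¹)

noncomputable def F1 (c x : ℝ) : ℝ := Real.exp ((x⁻¹ - 1) * Lg c x) * (1 + x * Gd c x)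

noncomputable def Gdd (c x : ℝ) : ℝ :=
  2 / x ^ 3 * Lg c x - 2 / x ^ 2 * (c * (1 + c * x)⁻¹ - (1 + x)⁻¹)
    + (x⁻¹ - 1) * ((1 + x)⁻¹ ^ 2 - c ^ 2 * (1 + c * x)⁻¹ ^ 2)

noncomputable def F2 (c x : ℝ) : ℝ :=
  Real.exp ((x⁻¹ - 1) * Lg c x) * (x * Gd c x ^ 2 + 2 * Gd c x + x * Gdd c x)

lemma hasDerivAt_Lg {c x : ℝ} (h1 : (0:ℝ) < 1 + c * x) (h2 : (0:ℝ) < 1 + x) :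
    HasDerivAt (fun y => Lg c y) (c * (1 + c * x)⁻¹ - (1 + x)⁻¹) x := by
  have d1 : HasDerivAt (fun y : ℝ => 1 + c * y) c x := by
    simpa using ((hasDerivAt_id x).const_mul c).const_add 1
  have d2 : HasDerivAt (fun y : ℝ => 1 + y) 1 x := by
    simpa using (hasDerivAt_id x).const_add 1
  have := (d1.log h1.ne').sub (d2.log h2.ne')
  simp only [Lg]
  refine this.congr_deriv ?_
  field_simp

lemma hasDerivAt_G {c x : ℝ} (hx : 0 < x) (h1 : (0:ℝ) < 1 + c * x) (h2 : (0:ℝ) < 1 + x) :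
    HasDerivAt (fun y => (y⁻¹ - 1) * Lg c y) (Gd c x) x := by
  have hi : HasDerivAt (fun y : ℝ => y⁻¹ - 1) (-(x ^ 2)⁻¹) x :=
    (hasDerivAt_inv hx.ne').sub_const 1
  have := hi.mul (hasDerivAt_Lg h1 h2)
  exact this

lemma hasDerivAt_Ff {c x : ℝ} (hx : 0 < x) (h1 : (0:ℝ) < 1 + c * x) (h2 : (0:ℝ) < 1 + x) :
    HasDerivAt (fun y => Ff c y) (F1 c x) x := by
  have := (hasDerivAt_id x).mul (hasDerivAt_G hx h1 h2).exp
  simp only [Ff]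
  refine this.congr_deriv ?_
  simp only [F1, id_eq]
  ring


lemma hasDerivAt_Gd {c x : ℝ} (hx : 0 < x) (h1 : (0:ℝ) < 1 + c * x) (h2 : (0:ℝ) < 1 + x) :
    HasDerivAt (fun y => Gd c y) (Gdd c x) x := by
  have d1 : HasDerivAt (fun y : ℝ => 1 + c * y) c x := by
    simpa using ((hasDerivAt_id x).const_mul c).const_add 1
  have d2 : HasDerivAt (fun y : ℝ => 1 + y) 1 x := by
    simpa using (hasDerivAt_id x).const_add 1
  have hA : HasDerivAt (fun y : ℝ => -(y ^ 2)⁻¹) (2 * x / (x ^ 2) ^ 2) x := by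
    have := ((hasDerivAt_pow 2 x).inv (pow_ne_zero 2 hx.ne')).neg
    refine this.congr_deriv ?_
    ring
  have hC : HasDerivAt (fun y : ℝ => y⁻¹ - 1) (-(x ^ 2)⁻¹) x :=
    (hasDerivAt_inv hx.ne').sub_const 1
  have hD : HasDerivAt (fun y : ℝ => c * (1 + c * y)⁻¹ - (1 + y)⁻¹)
      (c * (-c / (1 + c * x) ^ 2) - -1 / (1 + x) ^ 2) x :=
    ((d1.inv h1.ne').const_mul c).sub (d2.inv h2.ne')
  have := (hA.mul (hasDerivAt_Lg h1 h2)).add (hC.mul hD)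
  simp only [Gd]
  refine this.congr_deriv ?_
  simp only [Gdd]
  field_simp
  ring

lemma hasDerivAt_F1 {c x : ℝ} (hx : 0 < x) (h1 : (0:ℝ) < 1 + c * x) (h2 : (0:ℝ) < 1 + x) :
    HasDerivAt (fun y => F1 c y) (F2 c x) x := by
  have hE := (hasDerivAt_G hx h1 h2).exp
  have hrest : HasDerivAt (fun y : ℝ => 1 + y * Gd c y) (1 * Gd c x + x * Gdd c x) x :=
    ((hasDerivAt_id x).mul (hasDerivAt_Gd hx h1 h2)).const_add 1
  have := hE.mul hrest
  simp only [F1]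
  refine this.congr_deriv ?_
  simp only [F2, id_eq]
  ring

lemma log_pade {u : ℝ} (hu : 0 ≤ u) : Real.log (1 + u) ≤ (u + u / (1 + u)) / 2 := by
  set q : ℝ → ℝ := fun u => (u + u / (1 + u)) / 2 - Real.log (1 + u) with hq
  have hder : ∀ v : ℝ, 0 < 1 + v → HasDerivAt q
      (((1 + (1 * (1 + v) - v * 1) / (1 + v) ^ 2) / 2) - 1 / (1 + v)) v := by
    intro v hv
    have d2 : HasDerivAt (fun y : ℝ => 1 + y) 1 v := by
      simpa using (hasDerivAt_id v).const_add 1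
    have hdiv : HasDerivAt (fun y : ℝ => y / (1 + y))
        ((1 * (1 + v) - v * 1) / (1 + v) ^ 2) v := (hasDerivAt_id v).div d2 hv.ne'
    have hlog : HasDerivAt (fun y : ℝ => Real.log (1 + y)) (1 / (1 + v)) v := by
      simpa using d2.log hv.ne'
    exact (((hasDerivAt_id v).add hdiv).div_const 2).sub hlog
  have hmono : MonotoneOn q (Set.Ici 0) := by
    apply monotoneOn_of_deriv_nonneg (convex_Ici 0)
    · intro v hv
      exact (hder v (by simp at hv; linarith)).continuousAt.continuousWithinAt
    · intro v hv
      rw [interior_Ici] at hv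
      exact (hder v (by simp at hv; linarith)).differentiableAt.differentiableWithinAt
    · intro v hv
      rw [interior_Ici] at hv
      simp only [Set.mem_Ioi] at hv
      rw [(hder v (by linarith)).deriv]
      have h1v : (0:ℝ) < 1 + v := by linarith
      have : (1 + (1 * (1 + v) - v * 1) / (1 + v) ^ 2) / 2 - 1 / (1 + v)
          = v ^ 2 / (2 * (1 + v) ^ 2) := by
        field_simp
        ring
      rw [this]
      positivity
  have h0 : q 0 = 0 := by simp [hq]
  have := hmono (Set.self_mem_Ici) hu hu
  rw [h0] at this
  simp only [hq] at this
  linarith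

set_option maxHeartbeats 2000000 in
lemma F2_nonpos {c x : ℝ} (hx : 0 < x) (hc1 : 1 < c) (hc2 : c ≤ 2) : F2 c x ≤ 0 := by
  have h1 : (0:ℝ) < 1 + c * x := by nlinarith
  have h2 : (0:ℝ) < 1 + x := by linarith
  have hP : (0:ℝ) < (1 + x) * (1 + c * x) := by positivity
  set l : ℝ := Lg c x with hl
  -- lower bound on l
  have hl1 : (c - 1) * x * (1 + x) ≤ l * ((1 + x) * (1 + c * x)) := by
    have h := Real.log_le_sub_one_of_pos (div_pos h2 h1)
    rw [Real.log_div h2.ne' h1.ne'] at h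
    have hll : 1 - (1 + x) / (1 + c * x) ≤ l := by
      simp only [hl, Lg]; linarith
    have := mul_le_mul_of_nonneg_right hll hP.le
    calc (c - 1) * x * (1 + x) = (1 - (1 + x) / (1 + c * x)) * ((1 + x) * (1 + c * x)) := by
          field_simp; ring
      _ ≤ l * ((1 + x) * (1 + c * x)) := this
  -- upper bound on l
  have hl2 : l * ((1 + x) * (1 + c * x)) ≤ (c - 1) * x * (2 + (c + 1) * x) / 2 := by
    have hu0 : 0 ≤ (c - 1) * x / (1 + x) := div_nonneg (by nlinarith) h2.le
    have h := log_pade hu0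
    have h1u : (1:ℝ) + (c - 1) * x / (1 + x) = (1 + c * x) / (1 + x) := by
      field_simp [h2.ne']
      ring
    rw [h1u, Real.log_div h1.ne' h2.ne'] at h
    have hll : l ≤ ((c - 1) * x / (1 + x) + ((c - 1) * x / (1 + x)) / ((1 + c * x) / (1 + x))) / 2 := by
      simp only [hl, Lg]; exact h
    have hmm := mul_le_mul_of_nonneg_right hll hP.le
    calc l * ((1 + x) * (1 + c * x))
        ≤ (((c - 1) * x / (1 + x) + ((c - 1) * x / (1 + x)) / ((1 + c * x) / (1 + x))) / 2)
          * ((1 + x) * (1 + c * x)) := hmm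
      _ = (c - 1) * x * (2 + (c + 1) * x) / 2 := by
          field_simp [h2.ne', h1.ne']
          ring
  -- the quotient form of the second derivative factor
  have key : x * Gd c x ^ 2 + 2 * Gd c x + x * Gdd c x =
      ((l * ((1 + x) * (1 + c * x)) - (c - 1) * x * (1 - x)) ^ 2
        - x ^ 3 * (c - 1) * ((c + 3) + (3 * c + 1) * x))
        / (x ^ 3 * ((1 + x) * (1 + c * x)) ^ 2) := by
    simp only [Gd, Gdd, hl]
    field_simp [hx.ne', h1.ne', h2.ne']
    ring
  have hT0 : 0 ≤ l * ((1 + x) * (1 + c * x)) - (c - 1) * x * (1 - x) := by nlinarith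
  have hTB : l * ((1 + x) * (1 + c * x)) - (c - 1) * x * (1 - x) ≤ (c - 1) * (c + 3) * x ^ 2 / 2 := by
    nlinarith
  have hB2 : ((c - 1) * (c + 3) * x ^ 2 / 2) ^ 2 ≤ x ^ 3 * (c - 1) * ((c + 3) + (3 * c + 1) * x) := by
    have hpoly : 0 ≤ (2 - c) * (c ^ 2 + 7 * c + 5) + 3 := by nlinarith
    nlinarith [pow_pos hx 3, pow_pos hx 4, mul_nonneg (mul_nonneg (pow_pos hx 4).le
      (sub_nonneg.2 hc1.le)) hpoly]
  have hnum : (l * ((1 + x) * (1 + c * x)) - (c - 1) * x * (1 - x)) ^ 2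
      - x ^ 3 * (c - 1) * ((c + 3) + (3 * c + 1) * x) ≤ 0 := by nlinarith
  have hQ : x * Gd c x ^ 2 + 2 * Gd c x + x * Gdd c x ≤ 0 := by
    rw [key]
    apply div_nonpos_of_nonpos_of_nonneg hnum
    positivity
  simp only [F2]
  exact mul_nonpos_of_nonneg_of_nonpos (Real.exp_pos _).le hQ

lemma Ff_one {c : ℝ} : Ff c 1 = 1 := by simp [Ff]

lemma Ff_contOn {c : ℝ} (hc1 : 1 < c) : ContinuousOn (fun x => Ff c x) (Set.Ici 0) := by
  intro x hx
  simp only [Set.mem_Ici] at hx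
  rcases hx.lt_or_eq with hx' | hx'
  · have h1 : (0:ℝ) < 1 + c * x := by nlinarith
    have h2 : (0:ℝ) < 1 + x := by linarith
    exact (hasDerivAt_Ff hx' h1 h2).continuousAt.continuousWithinAt
  · subst hx'
    have hF0 : Ff c 0 = 0 := by simp [Ff]
    rw [ContinuousWithinAt, hF0]
    apply squeeze_zero' (g := fun t => t * Real.exp (c - 1))
    · filter_upwards [self_mem_nhdsWithin] with t ht
      exact mul_nonneg ht (Real.exp_pos _).le
    · have hev : ∀ᶠ t in 𝓝[Set.Ici 0] (0:ℝ), t < 1 :=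
        (eventually_lt_nhds (by norm_num : (0:ℝ) < 1)).filter_mono nhdsWithin_le_nhds
      filter_upwards [hev, self_mem_nhdsWithin] with t ht1 ht0
      simp only [Set.mem_Ici] at ht0
      rcases ht0.lt_or_eq with ht | ht
      · have h1t : (0:ℝ) < 1 + t := by linarith
        have h1ct : (0:ℝ) < 1 + c * t := by nlinarith
        have hL0 : 0 ≤ Lg c t := by
          have : Real.log (1 + t) ≤ Real.log (1 + c * t) :=
            Real.log_le_log h1t (by nlinarith)
          simp only [Lg]; linarith
        have hLup : Lg c t ≤ (c - 1) * t := by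
          have h := Real.log_le_sub_one_of_pos (div_pos h1ct h1t)
          rw [Real.log_div h1ct.ne' h1t.ne'] at h
          have hdd : (1 + c * t) / (1 + t) ≤ 1 + (c - 1) * t := by
            rw [div_le_iff₀ h1t]; nlinarith [mul_pos (sub_pos.2 hc1) (mul_pos ht ht)]
          simp only [Lg]; linarith
        have he : (t⁻¹ - 1) * Lg c t ≤ c - 1 := by
          have e1 : (t⁻¹ - 1) * Lg c t ≤ t⁻¹ * Lg c t :=
            mul_le_mul_of_nonneg_right (by linarith) hL0
          have e2 : t⁻¹ * Lg c t ≤ t⁻¹ * ((c - 1) * t) :=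
            mul_le_mul_of_nonneg_left hLup (inv_nonneg.2 ht.le)
          have e3 : t⁻¹ * ((c - 1) * t) = c - 1 := by field_simp
          linarith
        calc Ff c t = t * Real.exp ((t⁻¹ - 1) * Lg c t) := rfl
          _ ≤ t * Real.exp (c - 1) :=
              mul_le_mul_of_nonneg_left (Real.exp_le_exp.mpr he) ht.le
      · subst ht; simp [Ff]
    · have : Filter.Tendsto (fun t : ℝ => t * Real.exp (c - 1)) (𝓝 0) (𝓝 0) := by
        simpa using (continuous_mul_right (Real.exp (c - 1))).tendsto (0:ℝ)
      exact this.mono_left nhdsWithin_le_nhds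

lemma Ff_concave {c : ℝ} (hc1 : 1 < c) (hc2 : c ≤ 2) :
    ConcaveOn ℝ (Set.Ici 0) (fun x => Ff c x) := by
  apply concaveOn_of_hasDerivWithinAt2_nonpos (f' := fun x => F1 c x) (f'' := fun x => F2 c x)
    (convex_Ici 0) (Ff_contOn hc1)
  · intro x hx
    rw [interior_Ici] at hx
    have hx' : (0:ℝ) < x := hx
    exact (hasDerivAt_Ff hx' (by nlinarith) (by linarith)).hasDerivWithinAt
  · intro x hx
    rw [interior_Ici] at hx
    have hx' : (0:ℝ) < x := hx
    exact (hasDerivAt_F1 hx' (by nlinarith) (by linarith)).hasDerivWithinAt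
  · intro x hx
    rw [interior_Ici] at hx
    exact F2_nonpos hx hc1 hc2

lemma psi_eq {β x : ℝ} (hβ : 0 < β) (hx : 0 < x) (hx1 : x ≠ 1) :
    psi β x = (1 - Ff (1 + β) x) / (1 - x) := by
  have h2 : (0:ℝ) < 1 + x := by linarith
  have h1 : (0:ℝ) < 1 + (1 + β) * x := by nlinarith
  have hr : (0:ℝ) < (1 + x) / (1 + (1 + β) * x) := div_pos h2 h1
  have hphi : phi β x = Real.exp (-((x⁻¹ - 1) * Lg (1 + β) x)) := by
    rw [phi, Real.rpow_def_of_pos hr, Real.log_div h2.ne' h1.ne']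
    congr 1
    simp only [Lg]
    ring
  rw [psi, hphi, Ff, Real.exp_neg]
  have htp : (0:ℝ) < Real.exp ((x⁻¹ - 1) * Lg (1 + β) x) := Real.exp_pos _
  have hx1' : (1:ℝ) - x ≠ 0 := sub_ne_zero.2 (fun h => hx1 (by linarith))
  field_simp

theorem psi_decreasing (β : ℝ) (hβ : β ∈ Set.Ioc (0 : ℝ) 1) (g : ℝ → ℝ)
    (hg_cont : ContinuousOn g (Set.Ici (0 : ℝ)))
    (hg_eq : ∀ x : ℝ, 0 < x → x ≠ 1 → g x = psi β x) :
    AntitoneOn g (Set.Ici (0 : ℝ)) := by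
  obtain ⟨hβ0, hβ1⟩ := hβ
  set c := 1 + β with hc
  have hc1 : 1 < c := by simp [hc]; linarith
  have hc2 : c ≤ 2 := by simp [hc]; linarith
  have hconv : ConvexOn ℝ (Set.Ici 0) (-fun x => Ff c x) := (Ff_concave hc1 hc2).neg
  have hmain : ∀ p q : ℝ, 0 < p → p ≤ q → p ≠ 1 → q ≠ 1 → g q ≤ g p := by
    intro p q hp hpq hp1 hq1
    have hq : 0 < q := lt_of_lt_of_le hp hpq
    have key := hconv.secant_mono (a := 1) (x := p) (y := q)
      (Set.mem_Ici.2 (by norm_num)) (Set.mem_Ici.2 hp.le) (Set.mem_Ici.2 hq.le) hp1 hq1 hpq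
    simp only [Pi.neg_apply, Ff_one] at key
    have e : ∀ z : ℝ, z ≠ 1 → (-Ff c z - -1) / (z - 1) = -((1 - Ff c z) / (1 - z)) := by
      intro z hz
      have hz1 : z - 1 ≠ 0 := sub_ne_zero.2 hz
      have hz2 : (1:ℝ) - z ≠ 0 := sub_ne_zero.2 (Ne.symm hz)
      field_simp
      ring
    rw [e p hp1, e q hq1] at key
    have hgp : g p = (1 - Ff c p) / (1 - p) := by
      rw [hg_eq p hp hp1, psi_eq hβ0 hp hp1, ← hc]
    have hgq : g q = (1 - Ff c q) / (1 - q) := by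
      rw [hg_eq q hq hq1, psi_eq hβ0 hq hq1, ← hc]
    rw [hgp, hgq]
    linarith
  intro a ha b hb hab
  simp only [Set.mem_Ici] at ha hb
  have hne : ∀ r : ℝ, ∀ᶠ t in 𝓝[>] (0:ℝ), r + t ≠ 1 := by
    intro r
    rcases le_or_gt (1 - r) 0 with h | h
    · filter_upwards [self_mem_nhdsWithin] with t ht
      simp only [Set.mem_Ioi] at ht
      intro hEq; linarith
    · filter_upwards [(eventually_lt_nhds h).filter_mono nhdsWithin_le_nhds] with t ht
      intro hEq; linarith
  have htend : ∀ r : ℝ, 0 ≤ r →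
      Filter.Tendsto (fun t => g (r + t)) (𝓝[>] (0:ℝ)) (𝓝 (g r)) := by
    intro r hr
    apply (hg_cont r (Set.mem_Ici.2 hr)).tendsto.comp
    rw [tendsto_nhdsWithin_iff]
    constructor
    · have h : Filter.Tendsto (fun t : ℝ => r + t) (𝓝 0) (𝓝 r) := by
        have := Filter.Tendsto.const_add r (tendsto_id (x := 𝓝 (0:ℝ)))
        simpa using this
      exact h.mono_left nhdsWithin_le_nhds
    · filter_upwards [self_mem_nhdsWithin] with t ht
      simp only [Set.mem_Ioi] at ht
      exact Set.mem_Ici.2 (by linarith)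
  have hev : ∀ᶠ t in 𝓝[>] (0:ℝ), g (b + t) ≤ g (a + t) := by
    filter_upwards [self_mem_nhdsWithin, hne a, hne b] with t ht hta htb
    simp only [Set.mem_Ioi] at ht
    exact hmain (a + t) (b + t) (by linarith) (by linarith) hta htb
  exact le_of_tendsto_of_tendsto (htend b hb) (htend a ha) hev
end

section
/- Let r = 0, λ > 0, b > 0, γ > b, and let w be concave and differentiable on (0, γ−b) with w' ≥ −1. If v'(u) = ∫_u^γ (e^{(u−x)/b}/b) w'(x−b) dx − e^{(u−γ)/b} on (b,γ], then v'(u) − w'(u−b) ≤ −e^{(u−γ)/b}(w'(u−b)+1) ≤ 0 for all u ∈ (b,γ]. -/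
open intervalIntegral

lemma kernel_integral (b u γ : ℝ) (hb : 0 < b) :
    (∫ x in u..γ, Real.exp ((u - x) / b) / b) = 1 - Real.exp ((u - γ) / b) := by
  have hder : ∀ x ∈ Set.uIcc u γ,
      HasDerivAt (fun x => -Real.exp ((u - x) / b)) (Real.exp ((u - x) / b) / b) x := by
    intro x _
    have h1 : HasDerivAt (fun x : ℝ => (u - x) / b) (-1 / b) x := by
      have := ((hasDerivAt_id x).const_sub u).div_const b
      simpa using this
    have h2 : HasDerivAt (fun x => -Real.exp ((u - x) / b)) _ x := (h1.exp).neg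
    convert h2 using 1
    ring
  have hcont : ContinuousOn (fun x => Real.exp ((u - x) / b) / b) (Set.uIcc u γ) := by
    fun_prop
  have := intervalIntegral.integral_eq_sub_of_hasDerivAt hder hcont.intervalIntegrable
  rw [this]
  simp [sub_self]
  ring

theorem patient_case_propz (lam b γ : ℝ)
    (hlam : 0 < lam) (hb : 0 < b) (hγ : b < γ)
    (w1 v' : ℝ → ℝ)
    (hmono : AntitoneOn w1 (Set.Ioc 0 (γ - b)))
    (hge : ∀ x ∈ Set.Ioc (0 : ℝ) (γ - b), -1 ≤ w1 x)
    (hv' : ∀ u ∈ Set.Ioc b γ, v' u =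
      (∫ x in u..γ, Real.exp ((u - x) / b) / b * w1 (x - b)) - Real.exp ((u - γ) / b)) :
    ∀ u ∈ Set.Ioc b γ,
      v' u - w1 (u - b) ≤ -Real.exp ((u - γ) / b) * (w1 (u - b) + 1) ∧
        -Real.exp ((u - γ) / b) * (w1 (u - b) + 1) ≤ 0 := by
  intro u hu
  obtain ⟨hub, huγ⟩ := hu
  set E := Real.exp ((u - γ) / b) with hE
  set c := w1 (u - b) with hc
  have hmem : ∀ x ∈ Set.Icc u γ, x - b ∈ Set.Ioc (0 : ℝ) (γ - b) := by
    intro x hx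
    exact ⟨by linarith [hx.1], by linarith [hx.2]⟩
  have hc1 : -1 ≤ c := hge _ ⟨by linarith, by linarith⟩
  have hEpos : 0 < E := Real.exp_pos _
  have hAnti : AntitoneOn (fun x => w1 (x - b)) (Set.uIcc u γ) := by
    rw [Set.uIcc_of_le huγ]
    intro x hx y hy hxy
    exact hmono (hmem x hx) (hmem y hy) (by linarith)
  have hInt1 : IntervalIntegrable (fun x => w1 (x - b)) MeasureTheory.volume u γ :=
    hAnti.intervalIntegrable
  have hKc : Continuous (fun x : ℝ => Real.exp ((u - x) / b) / b) := by fun_prop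
  have hInt : IntervalIntegrable (fun x => Real.exp ((u - x) / b) / b * w1 (x - b))
      MeasureTheory.volume u γ := hInt1.continuousOn_mul hKc.continuousOn
  have hIntC : IntervalIntegrable (fun x => Real.exp ((u - x) / b) / b * c)
      MeasureTheory.volume u γ := (hKc.mul continuous_const).intervalIntegrable u γ
  have hbound : (∫ x in u..γ, Real.exp ((u - x) / b) / b * w1 (x - b)) ≤
      ∫ x in u..γ, Real.exp ((u - x) / b) / b * c := by
    apply intervalIntegral.integral_mono_on huγ hInt hIntC
    intro x hx
    have hK0 : 0 ≤ Real.exp ((u - x) / b) / b :=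
      div_nonneg (Real.exp_pos _).le hb.le
    have hw : w1 (x - b) ≤ c := by
      apply hmono ⟨by linarith, by linarith⟩ (hmem x hx) (by linarith [hx.1])
    exact mul_le_mul_of_nonneg_left hw hK0
  have hval : (∫ x in u..γ, Real.exp ((u - x) / b) / b * c) = (1 - E) * c := by
    rw [intervalIntegral.integral_mul_const, kernel_integral b u γ hb]
  rw [hval] at hbound
  have hv := hv' u ⟨hub, huγ⟩
  constructor
  · rw [hv]
    nlinarith
  · nlinarith
end
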